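/- Suppose x₁, x₂ : [0,a] → ℝ are both differentiable on [0,a] (one-sidedly at the endpoints) with x₁(0) = x₂(0) = x₀, x₁'(t) = f(t, x₁(t)) and x₂'(t) = f(t, x₂(t)) for all t ∈ [0,a]. Then x₁(t) = x₂(t) for all t ∈ [0,a]. In other words, the initial value problem x' = f(t,x), x(0) = x₀ has at most one solution with domain [0,a]. -/

import Mathlib

open Filter Topology Set

/-- Helper: a solution stays within the strip `|x t - x₀| ≤ M * t`. -/
lemma ivp_stays_in_strip (a M x₀ : ℝ) (ha : 0 < a) (hM : 0 < M)
    (f : ℝ × ℝ → ℝ)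
    (hf_bdd : ∀ u ∈ Set.Icc (0 : ℝ) a ×ˢ Set.Icc (x₀ - M * a) (x₀ + M * a), |f u| ≤ M)
    (x : ℝ → ℝ) (hx0 : x 0 = x₀)
    (hderiv : ∀ t ∈ Set.Icc (0 : ℝ) a,
      HasDerivWithinAt x (f (t, x t)) (Set.Icc (0 : ℝ) a) t) :
    ∀ t ∈ Set.Icc (0 : ℝ) a, |x t - x₀| ≤ M * t := by
  have hcx : ContinuousOn x (Set.Icc 0 a) := fun t ht => (hderiv t ht).continuousWithinAt
  by_contra h
  push_neg at h
  obtain ⟨t₀, ht₀, hbad⟩ := h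
  set B := {t ∈ Set.Icc (0 : ℝ) a | M * t < |x t - x₀|} with hB
  have hBne : B.Nonempty := ⟨t₀, ht₀, hbad⟩
  have hBbd : BddBelow B := ⟨0, fun t ht => ht.1.1⟩
  set c := sInf B with hc
  have hc0 : 0 ≤ c := le_csInf hBne fun t ht => ht.1.1
  have hca : c ≤ a := le_trans (csInf_le hBbd ⟨ht₀, hbad⟩) ht₀.2
  -- below c, the bound holds
  have hbelow : ∀ s ∈ Set.Icc (0 : ℝ) a, s < c → |x s - x₀| ≤ M * s := by
    intro s hs hsc
    by_contra hcon
    push_neg at hcon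
    exact absurd (csInf_le hBbd ⟨hs, hcon⟩) (not_le.2 hsc)
  -- bound at c
  have hgc : |x c - x₀| ≤ M * c := by
    rcases eq_or_lt_of_le hc0 with hc0' | hc0'
    · simp [← hc0', hx0]
    · have hcont : ContinuousWithinAt (fun s => |x s - x₀| - M * s) (Set.Iio c) c := by
        have h1 : ContinuousWithinAt x (Set.Icc 0 a) c := hcx c ⟨hc0, hca⟩
        have hmem : Set.Icc (0 : ℝ) a ∈ 𝓝[<] c := by
          filter_upwards [Ioo_mem_nhdsLT_of_mem (Set.mem_Ioc.2 ⟨hc0', le_rfl⟩),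
            self_mem_nhdsWithin] with s hs1 hs2
          exact ⟨hs1.1.le, le_trans (le_of_lt hs2) hca⟩
        have h2 : ContinuousWithinAt x (Set.Iio c) c := h1.mono_of_mem_nhdsWithin hmem
        exact ((h2.sub continuousWithinAt_const).abs.sub
          (continuousWithinAt_const.mul continuousWithinAt_id))
      have hle : |x c - x₀| - M * c ≤ 0 := by
        refine le_of_tendsto hcont ?_
        filter_upwards [Ioo_mem_nhdsLT_of_mem (Set.mem_Ioc.2 ⟨hc0', le_rfl⟩)] with s hs
        have := hbelow s ⟨hs.1.le, hs.2.le.trans hca⟩ hs.2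
        linarith
      linarith
  -- bound up to and including c
  have hupto : ∀ s ∈ Set.Icc (0 : ℝ) a, s ≤ c → |x s - x₀| ≤ M * s := by
    intro s hs hsc
    rcases lt_or_eq_of_le hsc with h' | h'
    · exact hbelow s hs h'
    · rw [h']; exact hgc
  rcases lt_or_eq_of_le hca with hca' | hca'
  · -- c < a : extend the bound past c, contradiction with sInf
    have hstrict : |x c - x₀| < M * a := lt_of_le_of_lt hgc (by nlinarith)
    obtain ⟨δ, hδ, hδ'⟩ := Metric.continuousWithinAt_iff.1 (hcx c ⟨hc0, hca⟩)
      (M * a - |x c - x₀|) (by linarith)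
    set b := min a (c + δ / 2) with hbdef
    have hcb : c < b := lt_min hca' (by linarith)
    have hba : b ≤ a := min_le_left _ _
    have hsubIcc : Set.Icc (0 : ℝ) b ⊆ Set.Icc 0 a := Set.Icc_subset_Icc le_rfl hba
    have memU : ∀ s ∈ Set.Icc (0 : ℝ) b,
        (s, x s) ∈ Set.Icc (0 : ℝ) a ×ˢ Set.Icc (x₀ - M * a) (x₀ + M * a) := by
      intro s hs
      refine Set.mk_mem_prod (hsubIcc hs) ?_
      have habs : |x s - x₀| ≤ M * a := by
        rcases le_or_gt s c with h' | h'
        · have := hupto s (hsubIcc hs) h'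
          nlinarith [hs.1]
        · have hdist : dist s c < δ := by
            rw [Real.dist_eq, abs_of_nonneg (by linarith)]
            have : s ≤ c + δ / 2 := le_trans hs.2 (min_le_right _ _)
            linarith
          have := hδ' (hsubIcc hs) hdist
          rw [Real.dist_eq] at this
          calc |x s - x₀| ≤ |x s - x c| + |x c - x₀| := abs_sub_le _ _ _
            _ ≤ M * a := by linarith
      rw [Set.mem_Icc]
      rw [abs_le] at habs
      constructor <;> linarith [habs.1, habs.2]
    have hbound : ∀ t ∈ Set.Icc (0 : ℝ) b, |x t - x₀| ≤ M * t := by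
      intro t ht
      have h0b : (0 : ℝ) ∈ Set.Icc (0 : ℝ) b := ⟨le_rfl, by linarith [hcb, hc0]⟩
      have := (convex_Icc (0 : ℝ) b).norm_image_sub_le_of_norm_hasDerivWithin_le
        (f' := fun s => f (s, x s))
        (fun s hs => (hderiv s (hsubIcc hs)).mono hsubIcc)
        (fun s hs => by
          rw [Real.norm_eq_abs]; exact hf_bdd _ (memU s hs)) h0b ht
      rw [hx0, Real.norm_eq_abs, Real.norm_eq_abs, sub_zero, abs_of_nonneg ht.1] at this
      exact this
    obtain ⟨t₁, ht₁B, ht₁b⟩ := exists_lt_of_csInf_lt hBne hcb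
    exact absurd (hbound t₁ ⟨ht₁B.1.1, ht₁b.le⟩) (not_le.2 ht₁B.2)
  · -- c = a : every element of B equals a, but the bound holds at a
    obtain ⟨t₁, ht₁⟩ := hBne
    have hta : t₁ = a := le_antisymm ht₁.1.2 (hca' ▸ csInf_le hBbd ht₁)
    rw [hta] at ht₁
    exact absurd (hca' ▸ hgc) (not_le.2 (hca' ▸ ht₁.2))

theorem ivp_uniqueness
    (a M L x₀ : ℝ) (ha : 0 < a) (hM : 0 < M) (hL : 0 < L)
    (U : Set (ℝ × ℝ))
    (hU : U = Set.Icc (0 : ℝ) a ×ˢ Set.Icc (x₀ - M * a) (x₀ + M * a))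
    (f : ℝ × ℝ → ℝ)
    (hf_lip : ∀ u ∈ U, ∀ v ∈ U, |f u - f v| ≤ L * (|u.1 - v.1| + |u.2 - v.2|))
    (hf_bdd : ∀ u ∈ U, |f u| ≤ M)
    (x₁ x₂ : ℝ → ℝ)
    (hx₁0 : x₁ 0 = x₀) (hx₂0 : x₂ 0 = x₀)
    (hderiv₁ : ∀ t ∈ Set.Icc (0 : ℝ) a,
      HasDerivWithinAt x₁ (f (t, x₁ t)) (Set.Icc (0 : ℝ) a) t)
    (hderiv₂ : ∀ t ∈ Set.Icc (0 : ℝ) a,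
      HasDerivWithinAt x₂ (f (t, x₂ t)) (Set.Icc (0 : ℝ) a) t) :
    ∀ t ∈ Set.Icc (0 : ℝ) a, x₁ t = x₂ t := by
  subst hU
  have hstrip₁ := ivp_stays_in_strip a M x₀ ha hM f hf_bdd x₁ hx₁0 hderiv₁
  have hstrip₂ := ivp_stays_in_strip a M x₀ ha hM f hf_bdd x₂ hx₂0 hderiv₂
  have hmemS : ∀ (x : ℝ → ℝ), (∀ t ∈ Set.Icc (0 : ℝ) a, |x t - x₀| ≤ M * t) →
      ∀ t ∈ Set.Icc (0 : ℝ) a, x t ∈ Set.Icc (x₀ - M * a) (x₀ + M * a) := by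
    intro x hx t ht
    have h1 := hx t ht
    rw [abs_le] at h1
    have h2 : M * t ≤ M * a := by nlinarith [ht.2]
    exact ⟨by linarith [h1.1], by linarith [h1.2]⟩
  set v : ℝ → ℝ → ℝ := fun t y => f (max 0 (min t a), y) with hv
  have hK : ∀ t, LipschitzOnWith ⟨L, hL.le⟩ (v t) (Set.Icc (x₀ - M * a) (x₀ + M * a)) := by
    intro t
    refine lipschitzOnWith_iff_dist_le_mul.2 ?_
    intro p hp q hq
    have hc : max 0 (min t a) ∈ Set.Icc (0 : ℝ) a :=
      ⟨le_max_left _ _, max_le ha.le (min_le_right _ _)⟩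
    have := hf_lip (max 0 (min t a), p) (Set.mk_mem_prod hc hp)
      (max 0 (min t a), q) (Set.mk_mem_prod hc hq)
    simp only [Real.dist_eq]
    have h' : |f (max 0 (min t a), p) - f (max 0 (min t a), q)| ≤ L * |p - q| := by
      simpa using this
    exact h'
  have key : ∀ (x : ℝ → ℝ), (∀ t ∈ Set.Icc (0 : ℝ) a,
        HasDerivWithinAt x (f (t, x t)) (Set.Icc (0 : ℝ) a) t) →
      ∀ t ∈ Set.Ico (0 : ℝ) a, HasDerivWithinAt x (v t (x t)) (Set.Ici t) t := by
    intro x hx t ht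
    have hva : v t (x t) = f (t, x t) := by
      simp [hv, min_eq_left ht.2.le, max_eq_right ht.1]
    rw [hva]
    exact (hx t ⟨ht.1, ht.2.le⟩).mono_of_mem_nhdsWithin (Icc_mem_nhdsGE_of_mem ht)
  have := ODE_solution_unique_of_mem_Icc_right (fun t _ => hK t)
    (fun t ht => (hderiv₁ t ht).continuousWithinAt)
    (key x₁ hderiv₁)
    (fun t ht => hmemS x₁ hstrip₁ t ⟨ht.1, ht.2.le⟩)
    (fun t ht => (hderiv₂ t ht).continuousWithinAt)
    (key x₂ hderiv₂)
    (fun t ht => hmemS x₂ hstrip₂ t ⟨ht.1, ht.2.le⟩)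
    (by rw [hx₁0, hx₂0])
  exact fun t ht => this ht
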